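/- Let D ∈ (0, 1/2) and q > 0. The integral ∫_0^∞ ((1+x)^{2D} − x^{2D})^{q/2} dx is finite if and only if q > 1/(1/2 − D). -/

import Mathlib

open Real Set MeasureTheory

/-- MVT bounds for the difference `(1+x)^(2D) - x^(2D)` for `x ≥ 1`. -/
lemma diff_bounds (D : ℝ) (hD0 : 0 < D) (hD : D < 1/2) {x : ℝ} (hx : 1 ≤ x) :
    2 * D * (2*x) ^ (2*D - 1) ≤ (1 + x) ^ (2*D) - x ^ (2*D) ∧
    (1 + x) ^ (2*D) - x ^ (2*D) ≤ 2 * D * x ^ (2*D - 1) := by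
  have hx0 : (0:ℝ) < x := lt_of_lt_of_le one_pos hx
  have hab : x < 1 + x := by linarith
  have hcont : ContinuousOn (fun t : ℝ => t ^ (2*D)) (Icc x (1+x)) := by
    intro t ht
    exact (Real.continuousAt_rpow_const t (2*D) (Or.inl (by nlinarith [ht.1]))).continuousWithinAt
  have hderiv : ∀ t ∈ Set.Ioo x (1+x),
      HasDerivAt (fun t : ℝ => t ^ (2*D)) (2*D * t ^ (2*D - 1)) t :=
    fun t ht => Real.hasDerivAt_rpow_const (Or.inl (by nlinarith [ht.1]))
  obtain ⟨c, hc, hceq⟩ := exists_hasDerivAt_eq_slope (fun t : ℝ => t ^ (2*D))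
    (fun t => 2*D * t ^ (2*D - 1)) hab hcont hderiv
  have hc0 : 0 < c := lt_trans hx0 hc.1
  have hden : (1 + x) - x = 1 := by ring
  rw [hden, div_one] at hceq
  have hexp : 2*D - 1 ≤ 0 := by linarith
  constructor
  · rw [← hceq]
    have : (2*x) ^ (2*D-1) ≤ c ^ (2*D-1) :=
      Real.rpow_le_rpow_of_nonpos hc0 (by linarith [hc.2]) hexp
    nlinarith
  · rw [← hceq]
    have : c ^ (2*D-1) ≤ x ^ (2*D-1) :=
      Real.rpow_le_rpow_of_nonpos hx0 (le_of_lt hc.1) hexp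
    nlinarith

lemma diff_pos (D : ℝ) (hD0 : 0 < D) {x : ℝ} (hx : 0 < x) :
    0 < (1 + x) ^ (2*D) - x ^ (2*D) := by
  have : x ^ (2*D) < (1 + x) ^ (2*D) :=
    Real.rpow_lt_rpow (le_of_lt hx) (by linarith) (by linarith)
  linarith

theorem stmt_3 (D q : ℝ) (hD0 : 0 < D) (hD : D < 1/2) (hq : 0 < q) :
    MeasureTheory.IntegrableOn
      (fun x : ℝ => ((1 + x) ^ (2 * D) - x ^ (2 * D)) ^ (q / 2)) (Set.Ioi 0)
    ↔ q > 1 / (1/2 - D) := by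
  set f : ℝ → ℝ := fun x => ((1 + x) ^ (2 * D) - x ^ (2 * D)) ^ (q / 2) with hf
  set s : ℝ := (2*D - 1) * (q/2) with hs
  have hq2 : (0:ℝ) < q / 2 := by linarith
  have hcont : Continuous f := by
    have h1 : Continuous fun x : ℝ => x ^ (2*D) := by
      rw [continuous_iff_continuousAt]
      exact fun x => Real.continuousAt_rpow_const x (2*D) (Or.inr (by linarith))
    have h2 : Continuous fun x : ℝ => (1 + x) ^ (2*D) - x ^ (2*D) :=
      (h1.comp (continuous_const.add continuous_id)).sub h1
    exact h2.rpow_const (fun x => Or.inr (le_of_lt hq2))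
  -- bounds on f for x ≥ 1
  have c1pos : (0:ℝ) < (2*D * 2 ^ (2*D-1)) ^ (q/2) :=
    Real.rpow_pos_of_pos (by positivity) _
  have c2pos : (0:ℝ) < (2*D) ^ (q/2) := Real.rpow_pos_of_pos (by linarith) _
  have fbound : ∀ x : ℝ, 1 ≤ x →
      (2*D * 2 ^ (2*D-1)) ^ (q/2) * x ^ s ≤ f x ∧ f x ≤ (2*D) ^ (q/2) * x ^ s := by
    intro x hx
    have hx0 : (0:ℝ) < x := lt_of_lt_of_le one_pos hx
    obtain ⟨hlo, hhi⟩ := diff_bounds D hD0 hD hx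
    have hx2D : (2*x) ^ (2*D-1) = 2 ^ (2*D-1) * x ^ (2*D-1) :=
      Real.mul_rpow (by norm_num) (le_of_lt hx0)
    have hxs : (x ^ (2*D-1)) ^ (q/2) = x ^ s := by
      rw [hs, ← Real.rpow_mul (le_of_lt hx0)]
    have hbase_nonneg : (0:ℝ) ≤ 2*D * (2*x) ^ (2*D-1) := by positivity
    constructor
    · calc (2*D * 2 ^ (2*D-1)) ^ (q/2) * x ^ s
          = (2*D * 2 ^ (2*D-1) * x ^ (2*D-1)) ^ (q/2) := by
            rw [Real.mul_rpow (by positivity) (Real.rpow_nonneg (le_of_lt hx0) _), hxs]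
        _ = (2*D * (2*x) ^ (2*D-1)) ^ (q/2) := by rw [hx2D]; ring_nf
        _ ≤ f x := Real.rpow_le_rpow hbase_nonneg hlo (le_of_lt hq2)
    · calc f x ≤ (2*D * x ^ (2*D-1)) ^ (q/2) :=
            Real.rpow_le_rpow (le_of_lt (diff_pos D hD0 hx0)) hhi (le_of_lt hq2)
        _ = (2*D) ^ (q/2) * x ^ s := by
            rw [Real.mul_rpow (by linarith) (Real.rpow_nonneg (le_of_lt hx0) _), hxs]
  have hq_iff : q > 1 / (1/2 - D) ↔ s < -1 := by
    rw [hs]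
    rw [gt_iff_lt, div_lt_iff₀ (by linarith : (0:ℝ) < 1/2 - D)]
    constructor
    · intro h; nlinarith
    · intro h; nlinarith
  constructor
  · intro hInt
    rw [hq_iff]
    have hInt1 : IntegrableOn f (Ioi 1) :=
      hInt.mono_set (Set.Ioi_subset_Ioi (by norm_num))
    have hInt2 : IntegrableOn
        (fun x : ℝ => (2*D * 2 ^ (2*D-1)) ^ (q/2) * x ^ s) (Ioi 1) := by
      apply Integrable.mono' hInt1
      · refine (ContinuousOn.aestronglyMeasurable ?_ measurableSet_Ioi)
        intro x hx
        have hxc : ContinuousAt (fun y : ℝ => y ^ s) x :=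
          Real.continuousAt_rpow_const x s (Or.inl (by simp at hx; linarith))
        exact (continuousAt_const.mul hxc).continuousWithinAt
      · filter_upwards [ae_restrict_mem measurableSet_Ioi] with x hx
        have hx1 : (1:ℝ) ≤ x := le_of_lt hx
        have hxs_nonneg : (0:ℝ) ≤ x ^ s := Real.rpow_nonneg (by linarith) _
        rw [Real.norm_eq_abs, abs_of_nonneg (by positivity)]
        exact (fbound x hx1).1
    have hInt3 : IntegrableOn (fun x : ℝ => x ^ s) (Ioi 1) := by
      have := hInt2.const_mul ((2*D * 2 ^ (2*D-1)) ^ (q/2))⁻¹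
      simpa [IntegrableOn, ← mul_assoc, inv_mul_cancel₀ (ne_of_gt c1pos)] using this
    exact (integrableOn_Ioi_rpow_iff one_pos).mp hInt3
  · intro hqgt
    have hslt : s < -1 := hq_iff.mp hqgt
    have hIoc : IntegrableOn f (Ioc 0 1) :=
      (hcont.integrableOn_Icc (a := 0) (b := 1)).mono_set Set.Ioc_subset_Icc_self
    have hIoi : IntegrableOn f (Ioi 1) := by
      have hbase : IntegrableOn (fun x : ℝ => x ^ s) (Ioi 1) :=
        (integrableOn_Ioi_rpow_iff one_pos).mpr hslt
      apply Integrable.mono' (hbase.const_mul ((2*D) ^ (q/2)))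
      · exact hcont.aestronglyMeasurable
      · filter_upwards [ae_restrict_mem measurableSet_Ioi] with x hx
        have hx1 : (1:ℝ) ≤ x := le_of_lt hx
        have hx0 : (0:ℝ) < x := lt_of_lt_of_le one_pos hx1
        rw [Real.norm_eq_abs, abs_of_nonneg (Real.rpow_nonneg (le_of_lt (diff_pos D hD0 hx0)) _)]
        exact (fbound x hx1).2
    have : IntegrableOn f (Ioc 0 1 ∪ Ioi 1) := hIoc.union hIoi
    rwa [Set.Ioc_union_Ioi_eq_Ioi (by norm_num)] at this
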